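/- Every R-module of α-finite type is of α-finite presentation. -/

import Mathlib

section Aux

variable {A : Type*} [CommRing A]

/-- extension by zero as a linear map `A^k → A^(k+1)` (snoc with 0). -/
private def snocMap (A : Type*) [CommRing A] (k : ℕ) : (Fin k → A) →ₗ[A] (Fin (k+1) → A) where
  toFun y := Fin.snoc y 0
  map_add' y z := by
    ext i
    refine Fin.lastCases ?_ (fun j => ?_) i <;> simp
  map_smul' c y := by
    ext i
    refine Fin.lastCases ?_ (fun j => ?_) i <;> simp

private def lastProj (A : Type*) [CommRing A] (k : ℕ) : (Fin (k+1) → A) →ₗ[A] A where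
  toFun x := x (Fin.last k)
  map_add' x y := rfl
  map_smul' c x := rfl

private lemma snocMap_funLeft {A : Type*} [CommRing A] {k : ℕ} (x : Fin (k+1) → A)
    (hx : lastProj A k x = 0) :
    snocMap A k (LinearMap.funLeft A A Fin.castSucc x) = x := by
  ext i
  refine Fin.lastCases ?_ (fun j => ?_) i
  · show (Fin.snoc (x ∘ Fin.castSucc) 0 : Fin (k+1) → A) (Fin.last k) = x (Fin.last k)
    rw [Fin.snoc_last]
    exact hx.symm
  · show (Fin.snoc (x ∘ Fin.castSucc) 0 : Fin (k+1) → A) j.castSucc = x j.castSucc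
    rw [Fin.snoc_castSucc]
    rfl

/-- Abstract key lemma: if every ideal of `A` is "β-principal" for every β in a
multiplicatively stable set `P`, then every submodule of `A^k` is β-finitely generated. -/
private lemma key_lemma (A : Type*) [CommRing A] (P : Set A)
    (hideal : ∀ β ∈ P, ∀ I : Submodule A A, ∃ δ ∈ I, ∀ a ∈ I, ∃ c : A, β * a = c * δ)
    (hsplit : ∀ β ∈ P, ∃ β₁ ∈ P, ∃ β₂ ∈ P, β = β₁ * β₂) :
    ∀ (k : ℕ), ∀ β ∈ P, ∀ N : Submodule A (Fin k → A),
      ∃ N₀ : Submodule A (Fin k → A), N₀.FG ∧ N₀ ≤ N ∧ ∀ n ∈ N, β • n ∈ N₀ := by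
  intro k
  induction k with
  | zero =>
    intro β _ N
    refine ⟨⊥, Submodule.fg_bot, bot_le, fun n hn => ?_⟩
    have : β • n = 0 := Subsingleton.elim _ _
    simp [this]
  | succ k IH =>
    intro β hβ N
    obtain ⟨β₁, hβ₁, β₂, hβ₂, hβ12⟩ := hsplit β hβ
    obtain ⟨δ, hδI, hδ⟩ := hideal β₂ hβ₂ (N.map (lastProj A k))
    obtain ⟨n, hnN, hnδ⟩ := Submodule.mem_map.1 hδI
    obtain ⟨N₀', hFG', hle', hsub'⟩ :=
      IH β₁ hβ₁ ((N ⊓ LinearMap.ker (lastProj A k)).map (LinearMap.funLeft A A Fin.castSucc))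
    refine ⟨N₀'.map (snocMap A k) ⊔ Submodule.span A {n}, ?_, ?_, ?_⟩
    · exact (hFG'.map _).sup (Submodule.fg_span_singleton n)
    · apply sup_le
      · rintro x ⟨y, hy, rfl⟩
        obtain ⟨z, hz, rfl⟩ := hle' hy
        rw [snocMap_funLeft z (LinearMap.mem_ker.1 hz.2)]
        exact hz.1
      · rw [Submodule.span_le, Set.singleton_subset_iff]
        exact hnN
    · intro x hxN
      obtain ⟨c, hc⟩ := hδ (lastProj A k x) ⟨x, hxN, rfl⟩
      set y := β₂ • x - c • n with hy
      have hyN : y ∈ N := N.sub_mem (N.smul_mem _ hxN) (N.smul_mem _ hnN)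
      have hyker : lastProj A k y = 0 := by
        have h : lastProj A k y = β₂ * lastProj A k x - c * lastProj A k n := by
          rw [hy, map_sub, map_smul, map_smul, smul_eq_mul, smul_eq_mul]
        rw [h, hnδ, hc, sub_self]
      have h1 : β₁ • (LinearMap.funLeft A A Fin.castSucc y) ∈ N₀' :=
        hsub' _ ⟨y, ⟨hyN, LinearMap.mem_ker.2 hyker⟩, rfl⟩
      have h2 : snocMap A k (β₁ • LinearMap.funLeft A A Fin.castSucc y) = β₁ • y := by
        rw [map_smul, snocMap_funLeft y hyker]
      have hdecomp : β • x = β₁ • y + (β₁ * c) • n := by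
        rw [hβ12, hy, smul_sub, mul_smul, mul_smul, smul_smul]
        abel
      rw [hdecomp]
      exact Submodule.add_mem _
        (Submodule.mem_sup_left ⟨_, h1, h2⟩)
        (Submodule.mem_sup_right (Submodule.smul_mem _ _ (Submodule.mem_span_singleton_self n)))

end Aux

set_option synthInstance.maxHeartbeats 1000000 in
set_option maxHeartbeats 1000000 in
/-- Let `R` be the ring of a non-discrete height-one valuation `v` on a field `K`, with
maximal ideal `m`. Every `R`-module of α-finite type is of α-finite presentation. -/
theorem statement9 {K : Type*} [Field K] (v : K → ℝ)
    (hv_mul : ∀ x y : K, x ≠ 0 → y ≠ 0 → v (x * y) = v x + v y)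
    (hv_add : ∀ x y : K, x ≠ 0 → y ≠ 0 → x + y ≠ 0 → min (v x) (v y) ≤ v (x + y))
    (hv_dense : Dense (v '' {x : K | x ≠ 0}))
    (R : Subring K) (hR : ∀ x : K, x ∈ R ↔ x = 0 ∨ 0 ≤ v x)
    (m : Ideal R) (hm : ∀ x : R, x ∈ m ↔ (x : K) = 0 ∨ 0 < v (x : K))
    {M : Type*} [AddCommGroup M] [Module (↥R) M]
    (hM : ∀ γ ∈ m, ∃ (k : ℕ) (u : (Fin k → ↥R) →ₗ[↥R] M), ∀ y : M, ∃ x, γ • y = u x) :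
    ∀ γ ∈ m, ∃ (k l : ℕ) (u : (Fin k → ↥R) →ₗ[↥R] M) (w : (Fin l → ↥R) →ₗ[↥R] (Fin k → ↥R)),
      (∀ x, u (w x) = 0) ∧ (∀ x, u x = 0 → ∃ z, γ • x = w z) ∧
      (∀ y : M, ∃ x, γ • y = u x) := by
  intro γ hγm
  by_cases hγ0 : (γ : K) = 0
  · -- γ = 0 : trivial witnesses
    have hγz : γ = 0 := Subtype.ext hγ0
    refine ⟨0, 0, 0, 0, ?_, ?_, ?_⟩
    · intro x; simp
    · intro x _; exact ⟨0, by simp [hγz]⟩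
    · intro y; exact ⟨0, by simp [hγz]⟩
  have hγv : 0 < v (γ : K) := ((hm γ).1 hγm).resolve_left hγ0
  -- basic facts
  have hmemR : ∀ x : K, x ≠ 0 → 0 ≤ v x → x ∈ R := fun x _ h => (hR x).2 (Or.inr h)
  have hvnn : ∀ x : ↥R, (x : K) ≠ 0 → 0 ≤ v (x : K) :=
    fun x hx => ((hR x).1 x.2).resolve_left hx
  have hdiv : ∀ x y : K, x ≠ 0 → y ≠ 0 → v (x * y⁻¹) = v x - v y := by
    intro x y hx hy
    have h := hv_mul (x * y⁻¹) y (mul_ne_zero hx (inv_ne_zero hy)) hy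
    rw [inv_mul_cancel_right₀ hy] at h
    linarith
  -- the set of "good" elements: nonzero of positive valuation
  set P : Set ↥R := {β : ↥R | (β : K) ≠ 0 ∧ 0 < v (β : K)} with hP
  -- ideal lemma: every ideal is β-principal for β ∈ P
  have ideal_lem : ∀ β ∈ P, ∀ I : Submodule ↥R ↥R, ∃ δ ∈ I, ∀ a ∈ I, ∃ c : ↥R, β * a = c * δ := by
    rintro β ⟨hβ0, hβv⟩ I
    by_cases hI : ∀ a ∈ I, a = 0
    · exact ⟨0, I.zero_mem, fun a ha => ⟨0, by rw [hI a ha]; ring⟩⟩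
    · push_neg at hI
      obtain ⟨a₀, ha₀I, ha₀⟩ := hI
      set S : Set ℝ := (fun a : ↥R => v (a : K)) '' {a : ↥R | a ∈ I ∧ a ≠ 0} with hS
      have hSne : S.Nonempty := ⟨_, ⟨a₀, ⟨ha₀I, ha₀⟩, rfl⟩⟩
      have hSbdd : BddBelow S := by
        refine ⟨0, ?_⟩
        rintro t ⟨a, ⟨haI, ha⟩, rfl⟩
        exact hvnn a (fun h => ha (Subtype.ext h))
      obtain ⟨t, ht, hδlt⟩ := exists_lt_of_csInf_lt hSne
        (by linarith : sInf S < sInf S + v (β : K))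
      obtain ⟨δ, ⟨hδI, hδ0⟩, rfl⟩ := ht
      refine ⟨δ, hδI, ?_⟩
      intro a haI
      by_cases ha : a = 0
      · exact ⟨0, by rw [ha]; ring⟩
      have hak : (a : K) ≠ 0 := fun h => ha (Subtype.ext h)
      have hδk : (δ : K) ≠ 0 := fun h => hδ0 (Subtype.ext h)
      have hsle : sInf S ≤ v (a : K) := csInf_le hSbdd ⟨a, ⟨haI, ha⟩, rfl⟩
      have hprod : v ((β : K) * a) = v (β : K) + v (a : K) := hv_mul _ _ hβ0 hak
      have hcK : ((β : K) * a * (δ : K)⁻¹) ∈ R :=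
        hmemR _ (mul_ne_zero (mul_ne_zero hβ0 hak) (inv_ne_zero hδk))
          (by rw [hdiv _ _ (mul_ne_zero hβ0 hak) hδk, hprod]; linarith)
      refine ⟨⟨_, hcK⟩, ?_⟩
      apply Subtype.ext
      push_cast
      field_simp
  -- splitting lemma
  have split_lem : ∀ β ∈ P, ∃ β₁ ∈ P, ∃ β₂ ∈ P, β = β₁ * β₂ := by
    rintro β ⟨hβ0, hβv⟩
    obtain ⟨t, ht, htIoo⟩ := hv_dense.exists_mem_open isOpen_Ioo
      (⟨v (β : K) / 2, by constructor <;> linarith⟩ : (Set.Ioo 0 (v (β : K))).Nonempty)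
    obtain ⟨d, hd0, rfl⟩ := ht
    have hd0' : d ≠ 0 := hd0
    have hrest : v ((β : K) * d⁻¹) = v (β : K) - v d := hdiv _ _ hβ0 hd0'
    refine ⟨⟨d, hmemR d hd0' (le_of_lt htIoo.1)⟩, ⟨hd0', htIoo.1⟩,
      ⟨(β : K) * d⁻¹, hmemR _ (mul_ne_zero hβ0 (inv_ne_zero hd0'))
        (by rw [hrest]; linarith [htIoo.2])⟩,
      ⟨mul_ne_zero hβ0 (inv_ne_zero hd0'), by
        show 0 < v ((β : K) * d⁻¹)
        rw [hrest]; linarith [htIoo.2]⟩, ?_⟩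
    apply Subtype.ext
    push_cast
    field_simp
  -- assemble
  obtain ⟨k, u, hu⟩ := hM γ hγm
  obtain ⟨N₀, hFG, hle, hker⟩ :=
    key_lemma ↥R P ideal_lem split_lem k γ ⟨hγ0, hγv⟩ (LinearMap.ker u)
  obtain ⟨s, hs⟩ := hFG
  set g : Fin s.card → (Fin k → ↥R) :=
    fun i => ((s.equivFin.symm i : ↥(↑s : Set (Fin k → ↥R))) : Fin k → ↥R) with hg
  have hrg : Set.range g = (↑s : Set (Fin k → ↥R)) := by
    ext x
    constructor
    · rintro ⟨i, rfl⟩; exact (s.equivFin.symm i).2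
    · intro hx; exact ⟨s.equivFin ⟨x, hx⟩, by simp [hg]⟩
  set w := Fintype.linearCombination ↥R g with hw
  have hwrange : LinearMap.range w = N₀ := by
    rw [hw, Fintype.range_linearCombination, hrg, hs]
  refine ⟨k, s.card, u, w, ?_, ?_, hu⟩
  · intro x
    have hmem : w x ∈ N₀ := hwrange ▸ LinearMap.mem_range_self w x
    exact LinearMap.mem_ker.1 (hle hmem)
  · intro x hx
    have hmem : γ • x ∈ N₀ := hker x (LinearMap.mem_ker.2 hx)
    rw [← hwrange] at hmem
    obtain ⟨z, hz⟩ := hmem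
    exact ⟨z, hz.symm⟩
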